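/- arXiv:1307.6501 — 2 statements merged into one kernel-verified Lean document; each statement's English description precedes it below -/
import Mathlib

section
/- Let F be a continuous strictly increasing distribution function, U the inverse of 1/(1−F), q := U∘exp, and suppose log q ∈ ERV_ρ(g) (locally uniformly). Given a threshold sequence y_n → ∞ with y_n = o of the extrapolation range in the sense that for T > 1, eventually [T^{-1} log n, T log n] ⊆ [y_n/λ, y_n λ] for some λ > 1, and given estimating functions ρ̄(y) → ρ a.s. and ḡ(y) ~ g(y) a.s. (positive), the estimator q̂ⁿ(z) := q(y_n) exp(ḡ(y_n) h_{ρ̄(y_n)}(z/y_n)) satisfies: for every T > 1, sup_{τ∈[1/T,T]} |(log q̂ⁿ(τ log n) − log q(τ log n))/log q(y_n)| → 0 a.s. as n → ∞. -/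
open Filter Real intervalIntegral



noncomputable def h (ρ lam : ℝ) : ℝ := if ρ = 0 then Real.log lam else (lam ^ ρ - 1) / ρ

lemma expInt (ρ a b : ℝ) : IntervalIntegrable (fun t => Real.exp (ρ * t)) MeasureTheory.volume a b :=
  (Real.continuous_exp.comp (continuous_const.mul continuous_id)).intervalIntegrable _ _

lemma h_int (ρ l : ℝ) (hl : 0 < l) :
    h ρ l = ∫ t in (0:ℝ)..Real.log l, Real.exp (ρ * t) := by
  rcases eq_or_ne ρ 0 with rfl | hρ
  · simp [h]
  · have hd : ∀ t ∈ Set.uIcc (0:ℝ) (Real.log l),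
        HasDerivAt (fun t => Real.exp (ρ * t) / ρ) (Real.exp (ρ * t)) t := by
      intro t _
      have h1 : HasDerivAt (fun t : ℝ => ρ * t) ρ t := by
        simpa using (hasDerivAt_id t).const_mul ρ
      have h2 := (Real.hasDerivAt_exp (ρ * t)).comp t h1
      have h3 := h2.div_const ρ
      simpa [mul_comm, mul_div_assoc, mul_div_cancel_left₀ _ hρ] using h3
    rw [intervalIntegral.integral_eq_sub_of_hasDerivAt hd (expInt ρ 0 (Real.log l))]
    rw [h, if_neg hρ, Real.rpow_def_of_pos hl]
    rw [mul_comm (Real.log l) ρ]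
    simp [sub_div]

lemma exp_sub_exp_abs (x y : ℝ) : |Real.exp x - Real.exp y| ≤ |x - y| * Real.exp (max x y) := by
  wlog hxy : y ≤ x generalizing x y
  · rw [abs_sub_comm, abs_sub_comm x y, max_comm]
    exact this y x (le_of_not_ge hxy)
  have h1 : Real.exp y ≤ Real.exp x := Real.exp_le_exp.2 hxy
  rw [abs_of_nonneg (by linarith), abs_of_nonneg (by linarith), max_eq_left hxy]
  have h2 : Real.exp y = Real.exp x * Real.exp (y - x) := by
    rw [← Real.exp_add]; ring_nf
  have h3 : (y - x) + 1 ≤ Real.exp (y - x) := Real.add_one_le_exp _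
  nlinarith [Real.exp_pos x]

lemma h_sub_int (ρ a b : ℝ) (ha : 0 < a) (hb : 0 < b) :
    h ρ b - h ρ a = ∫ t in (Real.log a)..(Real.log b), Real.exp (ρ * t) := by
  rw [h_int ρ a ha, h_int ρ b hb,
    intervalIntegral.integral_interval_sub_left (expInt ρ 0 (Real.log b)) (expInt ρ 0 (Real.log a))]

lemma h_mono (ρ a b : ℝ) (ha : 0 < a) (hab : a ≤ b) : h ρ a ≤ h ρ b := by
  have hb : 0 < b := lt_of_lt_of_le ha hab
  have hlog : Real.log a ≤ Real.log b := Real.log_le_log ha hab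
  have hnn : (0:ℝ) ≤ ∫ t in (Real.log a)..(Real.log b), Real.exp (ρ * t) :=
    intervalIntegral.integral_nonneg hlog (fun t _ => (Real.exp_pos _).le)
  have := h_sub_int ρ a b ha hb
  linarith

lemma h_two_pos (ρ : ℝ) : 0 < h ρ 2 := by
  rw [h_int ρ 2 (by norm_num)]
  exact intervalIntegral_pos_of_pos (expInt ρ 0 (Real.log 2)) (fun t => Real.exp_pos _)
    (Real.log_pos (by norm_num))


lemma h_lip (ρ lam a b : ℝ) (hlam : 1 < lam) (ha : a ∈ Set.Icc lam⁻¹ lam)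
    (hb : b ∈ Set.Icc lam⁻¹ lam) (hab : a ≤ b) :
    h ρ b - h ρ a ≤ (lam * Real.exp (|ρ| * Real.log lam)) * (b - a) := by
  have hlam0 : 0 < lam := lt_trans one_pos hlam
  have hinv : 0 < lam⁻¹ := inv_pos.2 hlam0
  have ha0 : 0 < a := lt_of_lt_of_le hinv ha.1
  have hb0 : 0 < b := lt_of_lt_of_le hinv hb.1
  have hloglam : 0 ≤ Real.log lam := Real.log_nonneg hlam.le
  have hlog : Real.log a ≤ Real.log b := Real.log_le_log ha0 hab
  have hbound : ∀ t ∈ Set.uIoc (Real.log a) (Real.log b),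
      ‖Real.exp (ρ * t)‖ ≤ Real.exp (|ρ| * Real.log lam) := by
    intro t ht
    rw [Set.uIoc_of_le hlog] at ht
    have h1 : |t| ≤ Real.log lam := by
      have l1 : Real.log a ≤ t := ht.1.le
      have l2 : t ≤ Real.log b := ht.2
      have l3 : Real.log b ≤ Real.log lam := Real.log_le_log hb0 hb.2
      have l4 : -Real.log lam ≤ Real.log a := by
        have := Real.log_le_log hinv ha.1
        rwa [Real.log_inv] at this
      rw [abs_le]; constructor <;> linarith
    rw [Real.norm_eq_abs, Real.abs_exp]
    apply Real.exp_le_exp.2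
    calc ρ * t ≤ |ρ * t| := le_abs_self _
    _ = |ρ| * |t| := abs_mul _ _
    _ ≤ |ρ| * Real.log lam := by
        exact mul_le_mul_of_nonneg_left h1 (abs_nonneg _)
  have hnorm := intervalIntegral.norm_integral_le_of_norm_le_const hbound
  rw [h_sub_int ρ a b ha0 hb0]
  have hle : |Real.log b - Real.log a| ≤ lam * (b - a) := by
    rw [abs_of_nonneg (by linarith)]
    have h2 : Real.log b - Real.log a = Real.log (b / a) := by
      rw [Real.log_div hb0.ne' ha0.ne']
    have h3 : Real.log (b / a) ≤ b / a - 1 := Real.log_le_sub_one_of_pos (by positivity)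
    have h4 : b / a - 1 = (b - a) / a := by field_simp
    have h5 : (b - a) / a ≤ lam * (b - a) := by
      rw [div_le_iff₀ ha0]
      have h6 : lam⁻¹ ≤ a := ha.1
      have : 1 ≤ lam * a := by
        have := mul_le_mul_of_nonneg_left h6 hlam0.le
        rwa [mul_inv_cancel₀ hlam0.ne'] at this
      nlinarith
    linarith
  calc (∫ t in (Real.log a)..(Real.log b), Real.exp (ρ * t))
      ≤ ‖∫ t in (Real.log a)..(Real.log b), Real.exp (ρ * t)‖ := le_abs_self _
  _ ≤ Real.exp (|ρ| * Real.log lam) * |Real.log b - Real.log a| := hnorm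
  _ ≤ Real.exp (|ρ| * Real.log lam) * (lam * (b - a)) :=
      mul_le_mul_of_nonneg_left hle (Real.exp_pos _).le
  _ = (lam * Real.exp (|ρ| * Real.log lam)) * (b - a) := by ring

lemma h_abs (ρ lam l : ℝ) (hlam : 1 < lam) (hl : l ∈ Set.Icc lam⁻¹ lam) :
    |h ρ l| ≤ Real.log lam * Real.exp (|ρ| * Real.log lam) := by
  have hlam0 : 0 < lam := lt_trans one_pos hlam
  have hinv : 0 < lam⁻¹ := inv_pos.2 hlam0
  have hl0 : 0 < l := lt_of_lt_of_le hinv hl.1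
  have hlogl : |Real.log l| ≤ Real.log lam := by
    have l3 : Real.log l ≤ Real.log lam := Real.log_le_log hl0 hl.2
    have l4 : -Real.log lam ≤ Real.log l := by
      have := Real.log_le_log hinv hl.1
      rwa [Real.log_inv] at this
    rw [abs_le]; exact ⟨l4, l3⟩
  have hbound : ∀ t ∈ Set.uIoc (0:ℝ) (Real.log l),
      ‖Real.exp (ρ * t)‖ ≤ Real.exp (|ρ| * Real.log lam) := by
    intro t ht
    have h1 : |t| ≤ Real.log lam := by
      rcases le_total 0 (Real.log l) with hc | hc
      · rw [Set.uIoc_of_le hc] at ht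
        rw [abs_of_nonneg ht.1.le]
        calc t ≤ Real.log l := ht.2
        _ ≤ |Real.log l| := le_abs_self _
        _ ≤ Real.log lam := hlogl
      · rw [Set.uIoc_of_ge hc] at ht
        rw [abs_of_nonpos ht.2]
        calc -t ≤ -Real.log l := by linarith [ht.1]
        _ ≤ |Real.log l| := by rw [← abs_neg]; exact le_abs_self _
        _ ≤ Real.log lam := hlogl
    rw [Real.norm_eq_abs, Real.abs_exp]
    apply Real.exp_le_exp.2
    calc ρ * t ≤ |ρ * t| := le_abs_self _
    _ = |ρ| * |t| := abs_mul _ _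
    _ ≤ |ρ| * Real.log lam := mul_le_mul_of_nonneg_left h1 (abs_nonneg _)
  have hnorm := intervalIntegral.norm_integral_le_of_norm_le_const hbound
  rw [h_int ρ l hl0]
  calc |∫ t in (0:ℝ)..(Real.log l), Real.exp (ρ * t)|
      ≤ Real.exp (|ρ| * Real.log lam) * |Real.log l - 0| := hnorm
  _ ≤ Real.exp (|ρ| * Real.log lam) * Real.log lam := by
      rw [sub_zero]; exact mul_le_mul_of_nonneg_left hlogl (Real.exp_pos _).le
  _ = Real.log lam * Real.exp (|ρ| * Real.log lam) := by ring


lemma h_rho_diff (ρ ρ' lam l : ℝ) (hlam : 1 < lam) (hl : l ∈ Set.Icc lam⁻¹ lam)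
    (hd : |ρ' - ρ| ≤ 1) :
    |h ρ' l - h ρ l| ≤
      |ρ' - ρ| * (Real.log lam * (Real.log lam * Real.exp ((|ρ| + 1) * Real.log lam))) := by
  have hlam0 : 0 < lam := lt_trans one_pos hlam
  have hinv : 0 < lam⁻¹ := inv_pos.2 hlam0
  have hl0 : 0 < l := lt_of_lt_of_le hinv hl.1
  have hloglam : 0 ≤ Real.log lam := Real.log_nonneg hlam.le
  have hlogl : |Real.log l| ≤ Real.log lam := by
    have l3 : Real.log l ≤ Real.log lam := Real.log_le_log hl0 hl.2
    have l4 : -Real.log lam ≤ Real.log l := by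
      have := Real.log_le_log hinv hl.1
      rwa [Real.log_inv] at this
    rw [abs_le]; exact ⟨l4, l3⟩
  have hsub : h ρ' l - h ρ l =
      ∫ t in (0:ℝ)..(Real.log l), (Real.exp (ρ' * t) - Real.exp (ρ * t)) := by
    rw [h_int ρ' l hl0, h_int ρ l hl0,
      intervalIntegral.integral_sub (expInt ρ' 0 (Real.log l)) (expInt ρ 0 (Real.log l))]
  have hbound : ∀ t ∈ Set.uIoc (0:ℝ) (Real.log l),
      ‖Real.exp (ρ' * t) - Real.exp (ρ * t)‖ ≤
        |ρ' - ρ| * (Real.log lam * Real.exp ((|ρ| + 1) * Real.log lam)) := by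
    intro t ht
    have h1 : |t| ≤ Real.log lam := by
      rcases le_total 0 (Real.log l) with hc | hc
      · rw [Set.uIoc_of_le hc] at ht
        rw [abs_of_nonneg ht.1.le]
        calc t ≤ Real.log l := ht.2
        _ ≤ |Real.log l| := le_abs_self _
        _ ≤ Real.log lam := hlogl
      · rw [Set.uIoc_of_ge hc] at ht
        rw [abs_of_nonpos ht.2]
        calc -t ≤ -Real.log l := by linarith [ht.1]
        _ ≤ |Real.log l| := by rw [← abs_neg]; exact le_abs_self _
        _ ≤ Real.log lam := hlogl
    have hρ' : |ρ'| ≤ |ρ| + 1 := by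
      calc |ρ'| = |ρ + (ρ' - ρ)| := by ring_nf
      _ ≤ |ρ| + |ρ' - ρ| := abs_add_le _ _
      _ ≤ |ρ| + 1 := by linarith
    have hmax : max (ρ' * t) (ρ * t) ≤ (|ρ| + 1) * Real.log lam := by
      apply max_le
      · calc ρ' * t ≤ |ρ' * t| := le_abs_self _
        _ = |ρ'| * |t| := abs_mul _ _
        _ ≤ (|ρ| + 1) * Real.log lam := by
            apply mul_le_mul hρ' h1 (abs_nonneg _) (by positivity)
      · calc ρ * t ≤ |ρ * t| := le_abs_self _
        _ = |ρ| * |t| := abs_mul _ _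
        _ ≤ (|ρ| + 1) * Real.log lam := by
            apply mul_le_mul (by linarith [abs_nonneg ρ]) h1 (abs_nonneg _) (by positivity)
    calc ‖Real.exp (ρ' * t) - Real.exp (ρ * t)‖
        ≤ |ρ' * t - ρ * t| * Real.exp (max (ρ' * t) (ρ * t)) := exp_sub_exp_abs _ _
    _ = (|ρ' - ρ| * |t|) * Real.exp (max (ρ' * t) (ρ * t)) := by
        rw [← abs_mul]; ring_nf
    _ ≤ (|ρ' - ρ| * Real.log lam) * Real.exp ((|ρ| + 1) * Real.log lam) := by
        apply mul_le_mul
        · exact mul_le_mul_of_nonneg_left h1 (abs_nonneg _)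
        · exact Real.exp_le_exp.2 hmax
        · exact (Real.exp_pos _).le
        · positivity
    _ = |ρ' - ρ| * (Real.log lam * Real.exp ((|ρ| + 1) * Real.log lam)) := by ring
  have hnorm := intervalIntegral.norm_integral_le_of_norm_le_const hbound
  rw [hsub]
  calc |∫ t in (0:ℝ)..(Real.log l), (Real.exp (ρ' * t) - Real.exp (ρ * t))|
      ≤ |ρ' - ρ| * (Real.log lam * Real.exp ((|ρ| + 1) * Real.log lam)) * |Real.log l - 0| := hnorm
  _ ≤ |ρ' - ρ| * (Real.log lam * Real.exp ((|ρ| + 1) * Real.log lam)) * Real.log lam := by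
      rw [sub_zero]
      exact mul_le_mul_of_nonneg_left hlogl (by positivity)
  _ = |ρ' - ρ| * (Real.log lam * (Real.log lam * Real.exp ((|ρ| + 1) * Real.log lam))) := by ring


lemma g_bound (f g : ℝ → ℝ) (ρ : ℝ)
    (hg : ∀ z, 0 < g z)
    (hERV : ∀ l : ℝ, 0 < l → Tendsto (fun z => (f (z * l) - f z) / g z) atTop (nhds (h ρ l)))
    (hf0 : ∀ᶠ z in atTop, 0 ≤ f z) :
    ∃ C : ℝ, 0 < C ∧ ∀ᶠ z in atTop, g z ≤ C * f z := by
  set h2 := h ρ 2 with hh2def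
  set h4 := h ρ 4 with hh4def
  have hh2 : 0 < h2 := h_two_pos ρ
  have hh24 : h2 ≤ h4 := h_mono ρ 2 4 (by norm_num) (by norm_num)
  -- eventual bounds
  have E2 : ∀ᶠ z in atTop, h2 / 2 ≤ (f (z * 2) - f z) / g z := by
    have := Metric.tendsto_nhds.mp (hERV 2 (by norm_num)) (h2 / 2) (by linarith)
    filter_upwards [this] with z hz
    rw [Real.dist_eq, abs_lt] at hz
    linarith
  have E4 : ∀ᶠ z in atTop, (f (z * 4) - f z) / g z ≤ h4 + 1 := by
    have := Metric.tendsto_nhds.mp (hERV 4 (by norm_num)) 1 one_pos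
    filter_upwards [this] with z hz
    rw [Real.dist_eq, abs_lt] at hz
    linarith
  have hmul2 : Tendsto (fun z : ℝ => z * 2) atTop atTop :=
    Tendsto.atTop_mul_const (by norm_num) tendsto_id
  have E2' : ∀ᶠ z in atTop, h2 / 2 ≤ (f (z * 2 * 2) - f (z * 2)) / g (z * 2) :=
    hmul2.eventually E2
  have hq : 0 < 2 / h2 := by positivity
  refine ⟨(2 / h2) ^ 2 * (h4 + 1 - h2 / 2), by nlinarith, ?_⟩
  have key : ∀ᶠ z in atTop, g (z * 2) ≤ (2 / h2) ^ 2 * (h4 + 1 - h2 / 2) * f (z * 2) := by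
    filter_upwards [E2, E4, E2', hf0] with z h1 h2' h3 h4'
    have hgz := hg z
    have hgz2 := hg (z * 2)
    have a1 : h2 / 2 * g z ≤ f (z * 2) - f z := by
      rw [div_le_div_iff₀ (by norm_num) hgz] at h1
      nlinarith
    have a2 : f (z * 4) - f z ≤ (h4 + 1) * g z := by
      rw [div_le_iff₀ hgz] at h2'
      linarith
    have a3 : h2 / 2 * g (z * 2) ≤ f (z * 2 * 2) - f (z * 2) := by
      rw [le_div_iff₀ hgz2] at h3
      nlinarith
    have hz42 : z * 2 * 2 = z * 4 := by ring
    rw [hz42] at a3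
    -- f (z*4) - f (z*2) ≤ (h4 + 1 - h2/2) * g z
    have a4 : f (z * 4) - f (z * 2) ≤ (h4 + 1 - h2 / 2) * g z := by nlinarith
    -- g (z*2) ≤ (2/h2) * (h4+1-h2/2) * g z
    have a5 : g (z * 2) ≤ 2 / h2 * (h4 + 1 - h2 / 2) * g z := by
      rw [div_mul_eq_mul_div, div_mul_eq_mul_div, le_div_iff₀ hh2]
      nlinarith
    -- g z ≤ (2/h2) * f (z*2)
    have a6 : g z ≤ 2 / h2 * f (z * 2) := by
      rw [div_mul_eq_mul_div, le_div_iff₀ hh2]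
      nlinarith
    have hpos : (0:ℝ) ≤ h4 + 1 - h2 / 2 := by nlinarith
    calc g (z * 2) ≤ 2 / h2 * (h4 + 1 - h2 / 2) * g z := a5
    _ ≤ 2 / h2 * (h4 + 1 - h2 / 2) * (2 / h2 * f (z * 2)) := by
        apply mul_le_mul_of_nonneg_left a6 (by positivity)
    _ = (2 / h2) ^ 2 * (h4 + 1 - h2 / 2) * f (z * 2) := by ring
  have hdiv2 : Tendsto (fun u : ℝ => u / 2) atTop atTop :=
    Tendsto.atTop_div_const (by norm_num) tendsto_id
  have := hdiv2.eventually key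
  filter_upwards [this] with u hu
  have : u / 2 * 2 = u := by ring
  rwa [this] at hu


lemma unif_erv (f g : ℝ → ℝ) (ρ z₀ : ℝ)
    (hg : ∀ z, 0 < g z)
    (hmono : ∀ a b : ℝ, z₀ ≤ a → a ≤ b → f a ≤ f b)
    (hERV : ∀ l : ℝ, 0 < l → Tendsto (fun z => (f (z * l) - f z) / g z) atTop (nhds (h ρ l)))
    (lam : ℝ) (hlam : 1 < lam) (ε : ℝ) (hε : 0 < ε) :
    ∀ᶠ z in atTop, ∀ l ∈ Set.Icc lam⁻¹ lam, |(f (z * l) - f z) / g z - h ρ l| ≤ ε := by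
  have hlam0 : 0 < lam := lt_trans one_pos hlam
  have hinv : 0 < lam⁻¹ := inv_pos.2 hlam0
  have hinvlt : lam⁻¹ ≤ lam := by
    have : lam⁻¹ ≤ 1 := inv_le_one_of_one_le₀ hlam.le
    linarith
  set K := lam * Real.exp (|ρ| * Real.log lam) with hKdef
  have hK : 0 < K := by positivity
  set δ := ε / (2 * K) with hδdef
  have hδ : 0 < δ := by positivity
  have hKδ : K * δ = ε / 2 := by
    rw [hδdef]; field_simp
  set m := ⌈(lam - lam⁻¹) / δ⌉₊ with hmdef
  set pt : ℕ → ℝ := fun i => min (lam⁻¹ + i * δ) lam with hptdef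
  have hpt_mem : ∀ i, pt i ∈ Set.Icc lam⁻¹ lam := by
    intro i
    constructor
    · apply le_min _ hinvlt
      have : (0:ℝ) ≤ i * δ := by positivity
      linarith
    · exact min_le_right _ _
  have hpt_pos : ∀ i, 0 < pt i := fun i => lt_of_lt_of_le hinv (hpt_mem i).1
  have hgrid : ∀ i, ∀ᶠ z in atTop, |(f (z * pt i) - f z) / g z - h ρ (pt i)| ≤ ε / 2 := by
    intro i
    have := Metric.tendsto_nhds.mp (hERV (pt i) (hpt_pos i)) (ε / 2) (by positivity)
    filter_upwards [this] with z hz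
    rw [Real.dist_eq] at hz
    exact hz.le
  have hall : ∀ᶠ z in atTop, ∀ i ∈ Finset.range (m + 2),
      |(f (z * pt i) - f z) / g z - h ρ (pt i)| ≤ ε / 2 :=
    (eventually_all_finset _).2 fun i _ => hgrid i
  filter_upwards [hall, eventually_ge_atTop (lam * max z₀ 1)] with z hz hzZ
  have hmax1 : (1:ℝ) ≤ max z₀ 1 := le_max_right _ _
  have hz0 : 0 < z := by nlinarith
  have hzl : ∀ a : ℝ, lam⁻¹ ≤ a → z₀ ≤ z * a := by
    intro a ha
    have h1 : lam * max z₀ 1 * lam⁻¹ ≤ z * a := by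
      apply mul_le_mul hzZ ha hinv.le hz0.le
    rw [mul_comm lam (max z₀ 1), mul_assoc, mul_inv_cancel₀ hlam0.ne', mul_one] at h1
    exact le_trans (le_max_left _ _) h1
  have hFmono : ∀ a b : ℝ, lam⁻¹ ≤ a → a ≤ b →
      (f (z * a) - f z) / g z ≤ (f (z * b) - f z) / g z := by
    intro a b ha hab
    have h1 : f (z * a) ≤ f (z * b) :=
      hmono _ _ (hzl a ha) (by nlinarith)
    apply div_le_div_of_nonneg_right (by linarith) (hg z).le
  intro l hl
  set x := (l - lam⁻¹) / δ with hxdef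
  have hx0 : 0 ≤ x := by
    apply div_nonneg _ hδ.le
    linarith [hl.1]
  set i := ⌊x⌋₊ with hidef
  have hi_le : (i : ℝ) ≤ x := Nat.floor_le hx0
  have hi_lt : x < i + 1 := Nat.lt_floor_add_one x
  have hxm : x ≤ (lam - lam⁻¹) / δ := by
    apply div_le_div_of_nonneg_right _ hδ.le
    linarith [hl.2]
  have him : i + 1 ∈ Finset.range (m + 2) := by
    rw [Finset.mem_range]
    have h1 : (i : ℝ) ≤ m := le_trans hi_le (le_trans hxm (Nat.le_ceil _))
    have : i ≤ m := by exact_mod_cast h1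
    omega
  have him' : i ∈ Finset.range (m + 2) := by
    rw [Finset.mem_range] at *
    omega
  have hxδ : x * δ = l - lam⁻¹ := by
    rw [hxdef]; field_simp
  have h_low : pt i ≤ l := by
    apply min_le_of_left_le
    have : (i : ℝ) * δ ≤ x * δ := mul_le_mul_of_nonneg_right hi_le hδ.le
    rw [hxδ] at this
    linarith
  have h_high : l ≤ pt (i + 1) := by
    apply le_min _ hl.2
    have : x * δ < ((i : ℝ) + 1) * δ := mul_lt_mul_of_pos_right hi_lt hδ
    rw [hxδ] at this
    push_cast
    linarith
  have h_d1 : pt (i + 1) - l ≤ δ := by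
    have h1 : pt (i + 1) ≤ lam⁻¹ + (i + 1 : ℕ) * δ := min_le_left _ _
    have h2 : (i : ℝ) * δ ≤ x * δ := mul_le_mul_of_nonneg_right hi_le hδ.le
    rw [hxδ] at h2
    push_cast at h1 ⊢
    linarith
  have h_d2 : l - pt i ≤ δ := by
    have h1 : x * δ < ((i : ℝ) + 1) * δ := mul_lt_mul_of_pos_right hi_lt hδ
    rw [hxδ] at h1
    rcases min_cases (lam⁻¹ + i * δ) lam with ⟨hc, _⟩ | ⟨hc, hc2⟩
    · have : pt i = lam⁻¹ + i * δ := hc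
      rw [this]
      linarith
    · have : pt i = lam := hc
      rw [this]
      linarith [hl.2]
  have e1 := hz i him'
  have e2 := hz (i + 1) him
  have m1 := hFmono (pt i) l (hpt_mem i).1 h_low
  have m2 := hFmono l (pt (i + 1)) hl.1 h_high
  have lip1 : h ρ l - h ρ (pt i) ≤ K * δ := by
    calc h ρ l - h ρ (pt i) ≤ K * (l - pt i) := h_lip ρ lam (pt i) l hlam (hpt_mem i) hl h_low
    _ ≤ K * δ := mul_le_mul_of_nonneg_left h_d2 hK.le
  have lip2 : h ρ (pt (i + 1)) - h ρ l ≤ K * δ := by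
    calc h ρ (pt (i + 1)) - h ρ l ≤ K * (pt (i + 1) - l) :=
      h_lip ρ lam l (pt (i + 1)) hlam hl (hpt_mem _) h_high
    _ ≤ K * δ := mul_le_mul_of_nonneg_left h_d1 hK.le
  rw [abs_le] at e1 e2 ⊢
  constructor
  · linarith [e1.1, e1.2, e2.1, e2.2, hKδ, m1, m2, lip1, lip2]
  · linarith [e1.1, e1.2, e2.1, e2.2, hKδ, m1, m2, lip1, lip2]

set_option maxHeartbeats 2000000 in
theorem stmt18 (F U g ρb gb : ℝ → ℝ) (ρ : ℝ) (y : ℕ → ℝ)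
    (hFcont : Continuous F) (hFmono : StrictMono F)
    (hF0 : ∀ x, 0 ≤ F x) (hF1 : ∀ x, F x ≤ 1)
    (hU : ∀ t : ℝ, 1 < t → 1 / (1 - F (U t)) = t)
    (hq1 : ∀ᶠ z in atTop, 1 < U (Real.exp z))
    (hgpos : ∀ z, 0 < g z) (hgbpos : ∀ z, 0 < gb z)
    (hERV : ∀ l : ℝ, 0 < l →
      Tendsto
        (fun z => (Real.log (U (Real.exp (z * l))) - Real.log (U (Real.exp z))) / g z)
        atTop (nhds (h ρ l)))
    (hy : Tendsto y atTop atTop)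
    (hincl : ∀ T : ℝ, 1 < T → ∃ lam : ℝ, 1 < lam ∧ ∀ᶠ n : ℕ in atTop,
      Set.Icc (T⁻¹ * Real.log n) (T * Real.log n) ⊆
        Set.Icc (y n / lam) (y n * lam))
    (hρb : Tendsto ρb atTop (nhds ρ))
    (hgb : Tendsto (fun z => gb z / g z) atTop (nhds 1)) :
    ∀ T : ℝ, 1 < T → ∀ ε : ℝ, 0 < ε → ∀ᶠ n : ℕ in atTop,
      ∀ τ ∈ Set.Icc T⁻¹ T,
        |(Real.log (U (Real.exp (y n)) *
              Real.exp (gb (y n) * h (ρb (y n)) (τ * Real.log n / y n))) -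
            Real.log (U (Real.exp (τ * Real.log n)))) /
          Real.log (U (Real.exp (y n)))| < ε := by
  intro T hT ε hε
  obtain ⟨lam, hlam, hinclev⟩ := hincl T hT
  set f : ℝ → ℝ := fun z => Real.log (U (Real.exp z)) with hfdef
  -- threshold for positivity / monotonicity
  obtain ⟨z₁, hz₁⟩ := eventually_atTop.mp hq1
  set z₀ := max z₁ 1 with hz₀def
  have hz₀1 : (1:ℝ) ≤ z₀ := le_max_right _ _
  have hU1 : ∀ z, z₀ ≤ z → 1 < U (Real.exp z) :=
    fun z hz => hz₁ z (le_trans (le_max_left _ _) hz)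
  have hfpos : ∀ z, z₀ ≤ z → 0 < f z := fun z hz => Real.log_pos (hU1 z hz)
  have hmono : ∀ a b : ℝ, z₀ ≤ a → a ≤ b → f a ≤ f b := by
    intro a b ha hab
    have hUa := hU1 a ha
    have hUb := hU1 b (ha.trans hab)
    have hea : (1:ℝ) < Real.exp a := by
      have : (0:ℝ) < a := by linarith
      calc (1:ℝ) = Real.exp 0 := Real.exp_zero.symm
      _ < Real.exp a := Real.exp_lt_exp.2 this
    have heb : (1:ℝ) < Real.exp b := by
      have : (0:ℝ) < b := by linarith
      calc (1:ℝ) = Real.exp 0 := Real.exp_zero.symm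
      _ < Real.exp b := Real.exp_lt_exp.2 this
    have hUmono : U (Real.exp a) ≤ U (Real.exp b) := by
      by_contra hcon
      push_neg at hcon
      have hFab : F (U (Real.exp b)) < F (U (Real.exp a)) := hFmono hcon
      have hFa : F (U (Real.exp a)) = 1 - 1 / Real.exp a := by
        have h1 := hU (Real.exp a) hea
        have h2 : 1 - F (U (Real.exp a)) ≠ 0 := by
          intro hzero
          rw [hzero] at h1
          simp at h1
          linarith
        field_simp at h1 ⊢
        nlinarith [Real.exp_pos a]
      have hFb : F (U (Real.exp b)) = 1 - 1 / Real.exp b := by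
        have h1 := hU (Real.exp b) heb
        have h2 : 1 - F (U (Real.exp b)) ≠ 0 := by
          intro hzero
          rw [hzero] at h1
          simp at h1
          linarith
        field_simp at h1 ⊢
        nlinarith [Real.exp_pos b]
      rw [hFa, hFb] at hFab
      have hle : Real.exp a ≤ Real.exp b := Real.exp_le_exp.2 hab
      have h3 : 1 / Real.exp b ≤ 1 / Real.exp a :=
        one_div_le_one_div_of_le (Real.exp_pos a) hle
      linarith
    exact Real.log_le_log (by linarith) hUmono
  have hERV' : ∀ l : ℝ, 0 < l →
      Tendsto (fun z => (f (z * l) - f z) / g z) atTop (nhds (h ρ l)) :=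
    fun l hl => hERV l hl
  obtain ⟨C, hC, hCev⟩ := g_bound f g ρ hgpos hERV' (by
    filter_upwards [eventually_ge_atTop z₀] with z hz
    exact (hfpos z hz).le)
  set M := Real.log lam * Real.exp (|ρ| * Real.log lam) with hMdef
  set Ch := Real.log lam * (Real.log lam * Real.exp ((|ρ| + 1) * Real.log lam)) with hChdef
  have hloglam : 0 ≤ Real.log lam := Real.log_nonneg hlam.le
  have hM0 : 0 ≤ M := mul_nonneg hloglam (Real.exp_pos _).le
  have hCh0 : 0 ≤ Ch := mul_nonneg hloglam (mul_nonneg hloglam (Real.exp_pos _).le)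
  set ε1 := ε / (4 * C) with hε1def
  have hε1 : 0 < ε1 := by positivity
  have hunif := unif_erv f g ρ z₀ hgpos hmono hERV' lam hlam ε1 hε1
  -- eventual facts along n
  have hd0 : (0:ℝ) < min 1 (ε / (8 * C * (Ch + 1))) := by positivity
  have he0 : (0:ℝ) < min 1 (ε / (4 * C * (M + 1))) := by positivity
  have hρev : ∀ᶠ z in atTop, |ρb z - ρ| ≤ min 1 (ε / (8 * C * (Ch + 1))) := by
    have := Metric.tendsto_nhds.mp hρb _ hd0
    filter_upwards [this] with z hz
    rw [Real.dist_eq] at hz; exact hz.le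
  have hgev : ∀ᶠ z in atTop, |gb z / g z - 1| ≤ min 1 (ε / (4 * C * (M + 1))) := by
    have := Metric.tendsto_nhds.mp hgb _ he0
    filter_upwards [this] with z hz
    rw [Real.dist_eq] at hz; exact hz.le
  have hnev : ∀ᶠ n : ℕ in atTop, (0:ℝ) < Real.log n := by
    filter_upwards [eventually_ge_atTop 2] with n hn
    apply Real.log_pos
    exact_mod_cast by omega
  filter_upwards [hinclev, hy.eventually hunif, hy.eventually hCev,
    hy.eventually (eventually_ge_atTop z₀), hy.eventually hρev, hy.eventually hgev,
    hnev] with n hincl1 h1 h2 h3 h4 h5 h6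
  intro τ hτ
  set L := Real.log (n:ℝ) with hLdef
  have hT0 : (0:ℝ) < T := lt_trans one_pos hT
  have hτ1 : T⁻¹ ≤ τ := hτ.1
  have hτ2 : τ ≤ T := hτ.2
  have hmem : τ * L ∈ Set.Icc (T⁻¹ * L) (T * L) :=
    ⟨mul_le_mul_of_nonneg_right hτ1 h6.le, mul_le_mul_of_nonneg_right hτ2 h6.le⟩
  have hmem2 := hincl1 hmem
  have hy0 : (0:ℝ) < y n := by linarith [h3, hz₀1]
  set l := τ * L / y n with hldef
  have hyl : y n * l = τ * L := by
    rw [hldef]; field_simp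
  have hl1 : lam⁻¹ ≤ l := by
    rw [hldef, le_div_iff₀ hy0]
    have heq : lam⁻¹ * y n = y n / lam := by rw [div_eq_mul_inv, mul_comm]
    rw [heq]
    exact hmem2.1
  have hl2 : l ≤ lam := by
    rw [hldef, div_le_iff₀ hy0]
    have := hmem2.2
    nlinarith [hmem2.2]
  have hlmem : l ∈ Set.Icc lam⁻¹ lam := ⟨hl1, hl2⟩
  have hUyn : 1 < U (Real.exp (y n)) := hU1 _ h3
  have hfyn : 0 < f (y n) := hfpos _ h3
  have hgy : 0 < g (y n) := hgpos (y n)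
  -- abbreviations
  set R := gb (y n) / g (y n) with hRdef
  set d := |ρb (y n) - ρ| with hddef
  set e := |R - 1| with hedef
  set Hb := h (ρb (y n)) l with hHbdef
  set A := (f (y n * l) - f (y n)) / g (y n) with hAdef
  have e_unif : |A - h ρ l| ≤ ε1 := h1 l hlmem
  have hd1 : d ≤ 1 := le_trans h4 (min_le_left _ _)
  have hd2 : d ≤ ε / (8 * C * (Ch + 1)) := le_trans h4 (min_le_right _ _)
  have he1 : e ≤ 1 := le_trans h5 (min_le_left _ _)
  have he2 : e ≤ ε / (4 * C * (M + 1)) := le_trans h5 (min_le_right _ _)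
  have e_rho : |Hb - h ρ l| ≤ d * Ch := by
    rw [hddef, hChdef]
    exact h_rho_diff ρ (ρb (y n)) lam l hlam hlmem (by rw [hddef] at hd1; exact hd1)
  have e_habs : |h ρ l| ≤ M := by
    rw [hMdef]; exact h_abs ρ lam l hlam hlmem
  have hRabs : |R| ≤ 2 := by
    have h' := abs_add_le (R - 1) 1
    rw [abs_one] at h'
    have h'' : R - 1 + 1 = R := by ring
    rw [h''] at h'
    have he1' : |R - 1| ≤ 1 := by rw [← hedef]; exact he1
    linarith
  have hB : |R * Hb - A| ≤ ε1 + (2 * (d * Ch) + e * M) := by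
    calc |R * Hb - A| = |(R * (Hb - h ρ l) + (R - 1) * h ρ l) + (h ρ l - A)| := by ring_nf
    _ ≤ |R * (Hb - h ρ l) + (R - 1) * h ρ l| + |h ρ l - A| := abs_add_le _ _
    _ ≤ (|R| * |Hb - h ρ l| + |R - 1| * |h ρ l|) + |A - h ρ l| := by
        rw [abs_sub_comm (h ρ l) A]
        have := abs_add_le (R * (Hb - h ρ l)) ((R - 1) * h ρ l)
        rw [abs_mul, abs_mul] at this
        linarith
    _ ≤ (2 * (d * Ch) + e * M) + ε1 := by
        have t1 : |R| * |Hb - h ρ l| ≤ 2 * (d * Ch) := by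
          apply mul_le_mul hRabs e_rho (abs_nonneg _) (by norm_num)
        have t2 : |R - 1| * |h ρ l| ≤ e * M := by
          rw [hedef]
          exact mul_le_mul le_rfl e_habs (abs_nonneg _) (abs_nonneg _)
        linarith
    _ = ε1 + (2 * (d * Ch) + e * M) := by ring
  have hnum : f (y n) + gb (y n) * Hb - f (y n * l) = g (y n) * (R * Hb - A) := by
    rw [hRdef, hAdef]; field_simp; ring
  -- final arithmetic bound
  have harith : C * (ε1 + (2 * (d * Ch) + e * M)) < ε := by
    have t1 : C * ε1 = ε / 4 := by
      rw [hε1def]; field_simp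
    have hd0' : 0 ≤ d := abs_nonneg _
    have he0' : 0 ≤ e := abs_nonneg _
    have t2 : C * (2 * (d * Ch)) ≤ ε / 4 := by
      have hq : d * (8 * C * (Ch + 1)) ≤ ε :=
        (le_div_iff₀ (by positivity)).mp hd2
      have hcd : (0:ℝ) ≤ d * C := mul_nonneg hd0' hC.le
      have hexp : d * (8 * C * (Ch + 1)) = 8 * (C * (d * Ch)) + 8 * (d * C) := by ring
      rw [hexp] at hq
      linarith
    have t3 : C * (e * M) ≤ ε / 4 := by
      have hq : e * (4 * C * (M + 1)) ≤ ε :=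
        (le_div_iff₀ (by positivity)).mp he2
      have hce : (0:ℝ) ≤ e * C := mul_nonneg he0' hC.le
      have hexp : e * (4 * C * (M + 1)) = 4 * (C * (e * M)) + 4 * (e * C) := by ring
      rw [hexp] at hq
      linarith
    have hexp2 : C * (ε1 + (2 * (d * Ch) + e * M)) =
        C * ε1 + (C * (2 * (d * Ch)) + C * (e * M)) := by ring
    rw [hexp2]
    linarith
  -- rewrite the goal
  have hne : U (Real.exp (y n)) ≠ 0 := by positivity
  rw [Real.log_mul hne (Real.exp_ne_zero _), Real.log_exp, ← hyl]
  show |(f (y n) + gb (y n) * Hb - f (y n * l)) / f (y n)| < ε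
  rw [abs_div, abs_of_pos hfyn, div_lt_iff₀ hfyn]
  have habs : |f (y n) + gb (y n) * Hb - f (y n * l)| = g (y n) * |R * Hb - A| := by
    rw [hnum, abs_mul, abs_of_pos hgy]
  rw [habs]
  calc g (y n) * |R * Hb - A| ≤ (C * f (y n)) * (ε1 + (2 * (d * Ch) + e * M)) := by
        apply mul_le_mul h2 hB (abs_nonneg _) (by positivity)
  _ = (C * (ε1 + (2 * (d * Ch) + e * M))) * f (y n) := by ring
  _ < ε * f (y n) := by
        apply mul_lt_mul_of_pos_right harith hfyn
end

section
/- Let k₂ : ℕ → ℕ be nondecreasing with k₂(n) ∈ {1,…,n−1}, limsup_{n→∞} (log k₂(n))/log n = c < 1, and k₂(n)/n → 0. For ι > 1 and j ∈ {0,1} define k_j(n) := ⌊(k₂(n)/n)^{ι^{j−2}} · n⌋ and y_n := log(n/k₀(n)). Then liminf_{n→∞} y_n / log n = (1−c)·ι^{-2} > 0, and consequently for every T ≥ 1 and every λ > T·ι²/(1−c), eventually [T^{-1} log n, T log n] ⊆ [y_n/λ, y_n·λ]. -/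
open Filter Real

set_option maxHeartbeats 1000000 in
theorem stmt19 (k₂ : ℕ → ℕ) (hk₂mono : Monotone k₂)
    (hk₂range : ∀ n : ℕ, 2 ≤ n → 1 ≤ k₂ n ∧ k₂ n < n)
    (c : ℝ) (hc : c < 1)
    (hlimsup : Filter.limsup (fun n : ℕ => Real.log (k₂ n) / Real.log n) atTop = c)
    (hk₂n : Tendsto (fun n : ℕ => (k₂ n : ℝ) / n) atTop (nhds 0))
    (ι : ℝ) (hι : 1 < ι)
    (k₀ k₁ : ℕ → ℕ)
    (hk₀ : ∀ n : ℕ, k₀ n = ⌊((k₂ n : ℝ) / n) ^ (ι ^ (-2 : ℝ)) * n⌋₊)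
    (hk₁ : ∀ n : ℕ, k₁ n = ⌊((k₂ n : ℝ) / n) ^ (ι ^ (-1 : ℝ)) * n⌋₊)
    (y : ℕ → ℝ) (hy : ∀ n : ℕ, y n = Real.log ((n : ℝ) / k₀ n)) :
    Filter.liminf (fun n : ℕ => y n / Real.log n) atTop = (1 - c) * ι ^ (-2 : ℝ) ∧
    0 < (1 - c) * ι ^ (-2 : ℝ) ∧
    ∀ T : ℝ, 1 ≤ T → ∀ lam : ℝ, T * ι ^ (2 : ℕ) / (1 - c) < lam →
      ∀ᶠ n : ℕ in atTop,
        Set.Icc (T⁻¹ * Real.log n) (T * Real.log n) ⊆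
          Set.Icc (y n / lam) (y n * lam) := by
  have hι0 : (0:ℝ) < ι := lt_trans one_pos hι
  set a : ℝ := ι ^ (-2:ℝ) with ha_def
  have ha0 : 0 < a := Real.rpow_pos_of_pos hι0 _
  have ha1 : a < 1 := Real.rpow_lt_one_of_one_lt_of_neg hι (by norm_num)
  set u : ℕ → ℝ := fun n => Real.log (k₂ n) / Real.log n with hu_def
  have htend : Tendsto (fun n : ℕ => ((n:ℝ)) ^ ((1:ℝ) - a)) atTop atTop :=
    (tendsto_rpow_atTop (by linarith)).comp tendsto_natCast_atTop_atTop
  have hlogtend : Tendsto (fun n : ℕ => Real.log n) atTop atTop :=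
    Real.tendsto_log_atTop.comp tendsto_natCast_atTop_atTop
  -- main eventual structural facts
  have hEv : ∀ᶠ n : ℕ in atTop,
      (0 ≤ y n / Real.log n - a * (1 - u n) ∧
       y n / Real.log n - a * (1 - u n) ≤ Real.log 2 / Real.log n) ∧
      (0 < Real.log n ∧ y n ≤ Real.log n ∧ 0 ≤ y n) ∧
      (0 ≤ u n ∧ u n ≤ 1) := by
    filter_upwards [eventually_ge_atTop 2, htend.eventually_ge_atTop 2] with n hn2 hx2'
    have hn2R : (2:ℝ) ≤ (n:ℝ) := by exact_mod_cast hn2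
    have hn1 : (1:ℝ) < n := by linarith
    have hn0 : (0:ℝ) < n := by linarith
    have hlogn : 0 < Real.log n := Real.log_pos hn1
    obtain ⟨hk1, hkn⟩ := hk₂range n hn2
    have hk0R : (1:ℝ) ≤ (k₂ n : ℝ) := by exact_mod_cast hk1
    have hknR : (k₂ n : ℝ) < n := by exact_mod_cast hkn
    set r : ℝ := (k₂ n : ℝ) / n with hr_def
    have hr0 : 0 < r := div_pos (by linarith) hn0
    have hrge : (n:ℝ)⁻¹ ≤ r := by
      rw [hr_def]
      rw [div_eq_mul_inv]
      nlinarith [inv_pos.2 hn0]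
    set x : ℝ := r ^ a * (n:ℝ) with hx_def
    have hxlb : (n:ℝ) ^ ((1:ℝ) - a) ≤ x := by
      have h1 : ((n:ℝ)⁻¹) ^ a ≤ r ^ a :=
        Real.rpow_le_rpow (by positivity) hrge ha0.le
      have h2 : ((n:ℝ)⁻¹) ^ a = (n:ℝ) ^ (-a) := by
        rw [Real.inv_rpow hn0.le, ← Real.rpow_neg hn0.le]
      have h3 : (n:ℝ) ^ ((1:ℝ) - a) = (n:ℝ) ^ (-a) * (n:ℝ) := by
        rw [sub_eq_neg_add, Real.rpow_add hn0, Real.rpow_one]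
      rw [hx_def, h3]
      have := h2 ▸ h1
      nlinarith
    have hx2 : (2:ℝ) ≤ x := le_trans hx2' hxlb
    have hk₀eq : (k₀ n : ℝ) = (⌊x⌋₊ : ℝ) := by rw [hk₀ n]
    have hk₀x : (k₀ n : ℝ) ≤ x := by
      rw [hk₀eq]; exact Nat.floor_le (by positivity)
    have hk₀half : x / 2 ≤ (k₀ n : ℝ) := by
      rw [hk₀eq]
      have := Nat.sub_one_lt_floor x
      linarith
    have hk₀1 : (1:ℝ) ≤ (k₀ n : ℝ) := le_trans (by linarith) hk₀half
    have hk₀0 : (0:ℝ) < (k₀ n : ℝ) := by linarith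
    have hlogx : Real.log x = a * (Real.log (k₂ n) - Real.log n) + Real.log n := by
      rw [hx_def, Real.log_mul (by positivity) hn0.ne', Real.log_rpow hr0, hr_def,
        Real.log_div (by positivity) hn0.ne']
    have hlogk_le : Real.log (k₀ n) ≤ Real.log x := Real.log_le_log hk₀0 hk₀x
    have hlogk_ge : Real.log x - Real.log 2 ≤ Real.log (k₀ n) := by
      have h := Real.log_le_log (by positivity) hk₀half
      rwa [Real.log_div (by linarith) two_ne_zero] at h
    have hyn : y n = Real.log n - Real.log (k₀ n) := by
      rw [hy n, Real.log_div hn0.ne' hk₀0.ne']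
    have hukey : a * (1 - u n) * Real.log n = Real.log n - Real.log x := by
      rw [hlogx, hu_def]
      field_simp
      ring
    have hdiff : y n / Real.log n - a * (1 - u n)
        = (Real.log x - Real.log (k₀ n)) / Real.log n := by
      rw [hyn, eq_div_iff hlogn.ne', sub_mul, div_mul_cancel₀ _ hlogn.ne', hukey]
      ring
    have hu0 : 0 ≤ u n := by
      rw [hu_def]
      exact div_nonneg (Real.log_nonneg hk0R) hlogn.le
    have hu1 : u n ≤ 1 := by
      rw [hu_def, div_le_one hlogn]
      exact Real.log_le_log (by linarith) hknR.le
    have hlogk0 : 0 ≤ Real.log (k₀ n) := Real.log_nonneg hk₀1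
    refine ⟨⟨?_, ?_⟩, ⟨hlogn, by linarith, ?_⟩, hu0, hu1⟩
    · rw [hdiff]
      exact div_nonneg (by linarith) hlogn.le
    · rw [hdiff]
      exact (div_le_div_iff_of_pos_right hlogn).2 (by linarith)
    · -- 0 ≤ y n
      have h2 : 0 ≤ a * (1 - u n) := mul_nonneg ha0.le (by linarith)
      have h4 : 0 ≤ a * (1 - u n) * Real.log n := mul_nonneg h2 hlogn.le
      rw [hyn]
      linarith [hukey, hlogk_le]
  -- boundedness facts
  have hv_lb : ∀ᶠ n : ℕ in atTop, (0:ℝ) ≤ y n / Real.log n := by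
    filter_upwards [hEv] with n h
    have h2 : 0 ≤ a * (1 - u n) := mul_nonneg ha0.le (by linarith [h.2.2.2])
    linarith [h.1.1]
  have hv_ub : ∀ᶠ n : ℕ in atTop, y n / Real.log n ≤ 1 := by
    filter_upwards [hEv] with n h
    exact (div_le_one h.2.1.1).2 h.2.1.2.1
  have hbddB : IsBoundedUnder (· ≥ ·) atTop (fun n : ℕ => y n / Real.log n) :=
    ⟨0, by simpa using hv_lb⟩
  have hbddA : IsBoundedUnder (· ≤ ·) atTop (fun n : ℕ => y n / Real.log n) :=
    ⟨1, by simpa using hv_ub⟩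
  have hcobG : IsCoboundedUnder (· ≥ ·) atTop (fun n : ℕ => y n / Real.log n) :=
    hbddA.isCoboundedUnder_ge
  have hu_lb : ∀ᶠ n : ℕ in atTop, (0:ℝ) ≤ u n := hEv.mono fun n h => h.2.2.1
  have hu_ub : ∀ᶠ n : ℕ in atTop, u n ≤ 1 := hEv.mono fun n h => h.2.2.2
  have hubddA : IsBoundedUnder (· ≤ ·) atTop u := ⟨1, by simpa using hu_ub⟩
  have hucobL : IsCoboundedUnder (· ≤ ·) atTop u :=
    IsBoundedUnder.isCoboundedUnder_le ⟨0, by simpa using hu_lb⟩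
  have hc0 : 0 ≤ c := by
    rw [← hlimsup]
    exact le_limsup_of_frequently_le hu_lb.frequently hubddA
  have hLlow : a * (1 - c) ≤ liminf (fun n : ℕ => y n / Real.log n) atTop := by
    refine le_of_forall_pos_le_add fun ε hε => ?_
    have hεa : 0 < ε / a := div_pos hε ha0
    have h1 : limsup u atTop < c + ε / a := by rw [hlimsup]; linarith
    have h2 : ∀ᶠ n : ℕ in atTop, u n < c + ε / a := eventually_lt_of_limsup_lt h1 hubddA
    have h3 : ∀ᶠ n : ℕ in atTop, a * (1 - c) - ε ≤ y n / Real.log n := by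
      filter_upwards [hEv, h2] with n h hn
      have haux : a * (1 - (c + ε / a)) ≤ a * (1 - u n) :=
        mul_le_mul_of_nonneg_left (by linarith) ha0.le
      have heq : a * (1 - (c + ε / a)) = a * (1 - c) - ε := by field_simp; ring
      linarith [h.1.1]
    have h4 := le_liminf_of_le hcobG h3
    linarith
  have hLhigh : liminf (fun n : ℕ => y n / Real.log n) atTop ≤ a * (1 - c) := by
    refine le_of_forall_pos_le_add fun ε hε => ?_
    have hεa : 0 < ε / (2 * a) := by positivity
    have h1 : c - ε / (2 * a) < limsup u atTop := by rw [hlimsup]; linarith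
    have h2 : ∃ᶠ n : ℕ in atTop, c - ε / (2 * a) < u n := frequently_lt_of_lt_limsup hucobL h1
    have h3 : ∀ᶠ n : ℕ in atTop, Real.log 2 / Real.log n ≤ ε / 2 := by
      filter_upwards [hlogtend.eventually_ge_atTop (2 * Real.log 2 / ε),
        hlogtend.eventually_gt_atTop 0] with n hn hn0
      rw [div_le_iff₀ hε] at hn
      rw [div_le_iff₀ hn0]
      nlinarith
    have h4 : ∃ᶠ n : ℕ in atTop, y n / Real.log n ≤ a * (1 - c) + ε := by
      refine (h2.and_eventually (hEv.and h3)).mono ?_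
      rintro n ⟨hun, h, hl2⟩
      have haux : a * (1 - u n) ≤ a * (1 - (c - ε / (2 * a))) :=
        mul_le_mul_of_nonneg_left (by linarith) ha0.le
      have heq : a * (1 - (c - ε / (2 * a))) = a * (1 - c) + ε / 2 := by field_simp; ring
      linarith [h.1.2]
    exact liminf_le_of_frequently_le h4 hbddB
  have hLeq : liminf (fun n : ℕ => y n / Real.log n) atTop = (1 - c) * a := by
    rw [mul_comm]; exact le_antisymm hLhigh hLlow
  have h1c : 0 < 1 - c := by linarith
  refine ⟨hLeq, mul_pos h1c ha0, ?_⟩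
  intro T hT lam hlam
  have hT0 : (0:ℝ) < T := lt_of_lt_of_le one_pos hT
  have hI2 : (0:ℝ) < ι ^ (2:ℕ) := by positivity
  have hI2gt : (1:ℝ) < ι ^ (2:ℕ) := one_lt_pow₀ hι (by norm_num)
  have haI : a = (ι ^ (2:ℕ))⁻¹ := by
    rw [ha_def, show ((-2:ℝ)) = -((2:ℕ):ℝ) by norm_num, Real.rpow_neg hι0.le,
      Real.rpow_natCast]
  have hlam0 : 0 < lam := by
    have h0 : 0 < T * ι ^ (2:ℕ) / (1 - c) := div_pos (by positivity) h1c
    linarith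
  have hkey : T * ι ^ (2:ℕ) < lam * (1 - c) := (div_lt_iff₀ h1c).mp hlam
  have hlamT : T < lam := by nlinarith
  have hTlam : T / lam < a * (1 - c) := by
    rw [haI, inv_mul_eq_div, div_lt_div_iff₀ hlam0 hI2]
    nlinarith
  have hlt : T / lam < liminf (fun n : ℕ => y n / Real.log n) atTop := by
    rw [hLeq, mul_comm]; exact hTlam
  have hev1 : ∀ᶠ n : ℕ in atTop, T / lam < y n / Real.log n :=
    eventually_lt_of_lt_liminf hlt hbddB
  filter_upwards [hev1, hEv] with n h1 h2
  obtain ⟨-, ⟨hlogn, hyle, hy0⟩, -⟩ := h2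
  intro z hz
  obtain ⟨hz1, hz2⟩ := hz
  constructor
  · have h5 : y n / lam ≤ T⁻¹ * Real.log n := by
      rw [div_le_iff₀ hlam0, inv_mul_eq_div, div_mul_eq_mul_div, le_div_iff₀ hT0]
      exact mul_le_mul hyle hlamT.le hT0.le hlogn.le
    linarith
  · have h6 : T * Real.log n < y n * lam := (div_lt_div_iff₀ hlam0 hlogn).mp h1
    linarith
end
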